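/- Let K be a field of characteristic 0. In K[X,Y] = K[x_1,…,x_n,y_1,…,y_n] with u_{jk} = x_jy_k − x_ky_j, the set of all products x_{i_1}⋯x_{i_c}·u_{j_1k_1}⋯u_{j_dk_d} such that no two factors u_{j_pk_p}, u_{j_qk_q} intersect each other (no p,q with j_p < j_q < k_p < k_q) and no factor u_{j_pk_p} covers an x_{i_t} (no p,t with j_p < i_t < k_p) is linearly independent over K. -/

import Mathlib

open MvPolynomial

/-- The set of "normal" products `x_{i_1} ⋯ x_{i_c} u_{j_1 k_1} ⋯ u_{j_d k_d}`
(with `u_{jk} = x_j y_k - x_k y_j`, `j < k`, `x_i = X (Sum.inl i)`, `y_i = X (Sum.inr i)`)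
such that no two factors `u_{j_p k_p}`, `u_{j_q k_q}` intersect each other
(no `p, q` with `j_p < j_q < k_p < k_q`) and no factor `u_{j_p k_p}` covers an `x_{i_t}`
(no `p, t` with `j_p < i_t < k_p`). -/
def normalProducts (K : Type*) [CommRing K] (n : ℕ) :
    Set (MvPolynomial (Fin n ⊕ Fin n) K) :=
  {w | ∃ (c d : ℕ) (idx : Fin c → Fin n) (jk : Fin d → Fin n × Fin n),
    (∀ p, (jk p).1 < (jk p).2) ∧
    (∀ p q, ¬((jk p).1 < (jk q).1 ∧ (jk q).1 < (jk p).2 ∧ (jk p).2 < (jk q).2)) ∧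
    (∀ p t, ¬((jk p).1 < idx t ∧ idx t < (jk p).2)) ∧
    w = (∏ t, X (Sum.inl (idx t))) *
      ∏ p, (X (Sum.inl (jk p).1) * X (Sum.inr (jk p).2) -
        X (Sum.inl (jk p).2) * X (Sum.inr (jk p).1))}


namespace NPaux

open AddMonoidAlgebra Sum

variable {K : Type*} [Field K] {n : ℕ}

abbrev LexB (n : ℕ) := Lex ((Fin n ⊕ₗ Fin n) →₀ ℕ)

noncomputable instance : OrderBot (LexB n) where
  bot := 0
  bot_le a := Finsupp.toLex_monotone (by intro i; simp)

noncomputable def Dm (n : ℕ) : ((Fin n ⊕ Fin n) →₀ ℕ) → LexB n :=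
  fun f => toLex f

lemma Dm_inj : Function.Injective (Dm n) := fun a b h => h

lemma Dm_add (a b : (Fin n ⊕ Fin n) →₀ ℕ) : Dm n (a + b) = Dm n a + Dm n b := rfl

example : AddLeftStrictMono (LexB n) := inferInstance
example : AddRightStrictMono (LexB n) := inferInstance
example : (⊥ : LexB n) + ⊥ = ⊥ := add_zero 0

lemma supX (i : Fin n) :
    supDegree (Dm n) (X (inl i) : MvPolynomial (Fin n ⊕ Fin n) K)
      = Dm n (Finsupp.single (inl i) 1) :=
  supDegree_single_ne_zero _ one_ne_zero

lemma monicX (i : Fin n) :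
    Monic (D := Dm n) (X (inl i) : MvPolynomial (Fin n ⊕ Fin n) K) := by
  rw [Monic, show (X (inl i) : MvPolynomial (Fin n ⊕ Fin n) K)
    = AddMonoidAlgebra.single (Finsupp.single (inl i) 1) 1 from rfl,
    leadingCoeff_single Dm_inj]

noncomputable def Uu (p : Fin n × Fin n) : MvPolynomial (Fin n ⊕ Fin n) K :=
  X (inl p.1) * X (inr p.2) - X (inl p.2) * X (inr p.1)

noncomputable def e1 (p : Fin n × Fin n) : (Fin n ⊕ Fin n) →₀ ℕ :=
  Finsupp.single (inl p.1) 1 + Finsupp.single (inr p.2) 1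

noncomputable def e2 (p : Fin n × Fin n) : (Fin n ⊕ Fin n) →₀ ℕ :=
  Finsupp.single (inl p.2) 1 + Finsupp.single (inr p.1) 1

lemma X_mul_X' (s t : Fin n ⊕ Fin n) : (X s * X t : MvPolynomial (Fin n ⊕ Fin n) K)
    = AddMonoidAlgebra.single (Finsupp.single s 1 + Finsupp.single t 1) 1 := by
  rw [show (X s : MvPolynomial _ K) = monomial (Finsupp.single s 1) 1 from rfl,
    show (X t : MvPolynomial _ K) = monomial (Finsupp.single t 1) 1 from rfl,
    monomial_mul, one_mul, ← single_eq_monomial]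

lemma Uu_eq (p : Fin n × Fin n) : (Uu p : MvPolynomial (Fin n ⊕ Fin n) K)
    = AddMonoidAlgebra.single (e1 p) 1 + AddMonoidAlgebra.single (e2 p) (-1) := by
  rw [Uu, sub_eq_add_neg, X_mul_X', X_mul_X', e1, e2]
  congr 1
  exact (AddMonoidAlgebra.single_neg _ _).symm

lemma Dm_lt {p : Fin n × Fin n} (hp : p.1 < p.2) : Dm n (e2 p) < Dm n (e1 p) := by
  rw [Dm, Dm, Finsupp.Lex.lt_iff]
  refine ⟨(inl p.1 : Fin n ⊕ₗ Fin n), fun j hj => ?_, ?_⟩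
  · rcases j with i | i
    · have hi : i < p.1 := by
        simpa using (Sum.Lex.inl_lt_inl_iff (a := i)).mp hj
      show (e2 p) (inl i) = (e1 p) (inl i)
      simp only [e1, e2, ofLex_toLex, Finsupp.add_apply, Finsupp.single_apply]
      rw [if_neg (fun h => (hi.trans hp).ne' (Sum.inl.inj h)),
        if_neg (fun h => hi.ne' (Sum.inl.inj h))]
      rw [if_neg Sum.inr_ne_inl, if_neg Sum.inr_ne_inl]
    · exact absurd hj (Sum.Lex.not_inr_lt_inl)
  · show (e2 p) (inl p.1) < (e1 p) (inl p.1)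
    simp only [e1, e2, ofLex_toLex, Finsupp.add_apply, Finsupp.single_apply]
    rw [if_neg (fun h => hp.ne' (Sum.inl.inj h)),
      if_neg (fun (h : Sum.inr p.1 = Sum.inl p.1) => Sum.inr_ne_inl h),
      if_neg (fun (h : Sum.inr p.2 = Sum.inl p.1) => Sum.inr_ne_inl h)]
    norm_num

lemma supU {p : Fin n × Fin n} (hp : p.1 < p.2) :
    supDegree (Dm n) (Uu p : MvPolynomial (Fin n ⊕ Fin n) K) = Dm n (e1 p) := by
  rw [Uu_eq]
  rw [supDegree_add_eq_left, supDegree_single_ne_zero _ one_ne_zero]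
  rw [supDegree_single_ne_zero _ (neg_ne_zero.mpr one_ne_zero),
    supDegree_single_ne_zero _ one_ne_zero]
  exact Dm_lt hp

lemma monicU {p : Fin n × Fin n} (hp : p.1 < p.2) :
    Monic (D := Dm n) (Uu p : MvPolynomial (Fin n ⊕ Fin n) K) := by
  rw [Uu_eq, Monic, leadingCoeff_add_eq_left, leadingCoeff_single Dm_inj]
  rw [supDegree_single_ne_zero _ (neg_ne_zero.mpr one_ne_zero),
    supDegree_single_ne_zero _ one_ne_zero]
  exact Dm_lt hp

lemma bot_eq : (⊥ : LexB n) = 0 := rfl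

lemma prod_monic (Q : Multiset ((((Fin n ⊕ Fin n) →₀ ℕ)) × MvPolynomial (Fin n ⊕ Fin n) K))
    (h : ∀ q ∈ Q, Monic (D := Dm n) q.2 ∧ supDegree (Dm n) q.2 = Dm n q.1) :
    Monic (D := Dm n) (Q.map Prod.snd).prod ∧
      supDegree (Dm n) (Q.map Prod.snd).prod = Dm n (Q.map Prod.fst).sum := by
  induction Q using Multiset.induction with
  | empty =>
    constructor
    · exact monic_one Dm_inj
    · simp only [Multiset.map_zero, Multiset.prod_zero, Multiset.sum_zero]
      rw [show (1 : MvPolynomial (Fin n ⊕ Fin n) K)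
        = AddMonoidAlgebra.single 0 1 from rfl]
      exact supDegree_single_ne_zero _ one_ne_zero
  | cons p Q ih =>
    have hp := h p (Multiset.mem_cons_self _ _)
    have hQ := ih (fun q hq => h q (Multiset.mem_cons_of_mem hq))
    simp only [Multiset.map_cons, Multiset.prod_cons, Multiset.sum_cons]
    constructor
    · exact Monic.mul Dm_inj Dm_add hp.1 hQ.1
    · rw [Monic.supDegree_mul Dm_inj Dm_add (by rw [bot_eq]; exact add_zero 0) hp.1 hQ.1,
        hp.2, hQ.2, ← Dm_add]

lemma sum_single_eq_toFinsupp (M : Multiset (Fin n ⊕ Fin n)) :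
    (M.map (fun s => Finsupp.single s (1 : ℕ))).sum = Multiset.toFinsupp M := by
  induction M using Multiset.induction with
  | empty => simp
  | cons a M ih =>
    rw [Multiset.map_cons, Multiset.sum_cons, ih, ← Multiset.singleton_add,
      Multiset.toFinsupp_add, Multiset.toFinsupp_singleton]

noncomputable def pairX (K : Type*) [Field K] (i : Fin n) :
    (((Fin n ⊕ Fin n) →₀ ℕ) × MvPolynomial (Fin n ⊕ Fin n) K) :=
  (Finsupp.single (inl i) 1, X (inl i))

noncomputable def pairU (K : Type*) [Field K] (p : Fin n × Fin n) :
    (((Fin n ⊕ Fin n) →₀ ℕ) × MvPolynomial (Fin n ⊕ Fin n) K) :=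
  (e1 p, Uu p)

noncomputable def W (F : Multiset (Fin n)) (P : Multiset (Fin n × Fin n)) :
    MvPolynomial (Fin n ⊕ Fin n) K :=
  (F.map (fun i => X (inl i))).prod * (P.map Uu).prod

def Emul (F : Multiset (Fin n)) (P : Multiset (Fin n × Fin n)) :
    Multiset (Fin n ⊕ Fin n) :=
  (F + P.map Prod.fst).map inl + (P.map Prod.snd).map inr

lemma W_spec {F : Multiset (Fin n)} {P : Multiset (Fin n × Fin n)}
    (hV : ∀ p ∈ P, p.1 < p.2) :
    Monic (D := Dm n) (W F P : MvPolynomial (Fin n ⊕ Fin n) K) ∧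
      supDegree (Dm n) (W F P : MvPolynomial (Fin n ⊕ Fin n) K)
        = Dm n (Multiset.toFinsupp (Emul F P)) := by
  have key := prod_monic (K := K) (F.map (pairX K) + P.map (pairU K))
    (by
      intro q hq
      rcases Multiset.mem_add.mp hq with h | h
      · obtain ⟨i, _, rfl⟩ := Multiset.mem_map.mp h
        exact ⟨monicX i, supX i⟩
      · obtain ⟨p, hp, rfl⟩ := Multiset.mem_map.mp h
        exact ⟨monicU (hV p hp), supU (hV p hp)⟩)
  have hsnd : ((F.map (pairX K) + P.map (pairU K)).map Prod.snd).prod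
      = (W F P : MvPolynomial (Fin n ⊕ Fin n) K) := by
    rw [Multiset.map_add, Multiset.prod_add, Multiset.map_map, Multiset.map_map]
    rfl
  have hfst : ((F.map (pairX K) + P.map (pairU K)).map Prod.fst).sum
      = Multiset.toFinsupp (Emul F P) := by
    rw [Multiset.map_add, Multiset.sum_add, Multiset.map_map, Multiset.map_map]
    have h1 : (F.map (Prod.fst ∘ pairX K)).sum = Multiset.toFinsupp (F.map inl) := by
      rw [← sum_single_eq_toFinsupp, Multiset.map_map]
      rfl
    have h2 : (P.map (Prod.fst ∘ pairU K)).sum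
        = Multiset.toFinsupp ((P.map Prod.fst).map inl)
          + Multiset.toFinsupp ((P.map Prod.snd).map inr) := by
      rw [← sum_single_eq_toFinsupp, ← sum_single_eq_toFinsupp]
      simp only [Multiset.map_map]
      rw [show (P.map (Prod.fst ∘ pairU K))
        = P.map (fun p => Finsupp.single (inl p.1) 1 + Finsupp.single (inr p.2) 1)
        from Multiset.map_congr rfl (fun p _ => rfl)]
      rw [Multiset.sum_map_add]
      rfl
    rw [h1, h2, Emul, Multiset.map_add, Multiset.toFinsupp_add, Multiset.toFinsupp_add]
    abel
  rw [hsnd, hfst] at key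
  exact key

variable {n : ℕ}

def Valid (F : Multiset (Fin n)) (P : Multiset (Fin n × Fin n)) : Prop :=
  (∀ p ∈ P, p.1 < p.2) ∧
  (∀ p ∈ P, ∀ q ∈ P, ¬(p.1 < q.1 ∧ q.1 < p.2 ∧ p.2 < q.2)) ∧
  (∀ p ∈ P, ∀ t ∈ F, ¬(p.1 < t ∧ t < p.2))

lemma valid_mono {F F' : Multiset (Fin n)} {P P' : Multiset (Fin n × Fin n)}
    (hF : F' ≤ F) (hP : P' ≤ P) (h : Valid F P) : Valid F' P' :=
  ⟨fun p hp => h.1 p (Multiset.mem_of_le hP hp),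
   fun p hp q hq => h.2.1 p (Multiset.mem_of_le hP hp) q (Multiset.mem_of_le hP hq),
   fun p hp t ht => h.2.2 p (Multiset.mem_of_le hP hp) t (Multiset.mem_of_le hF ht)⟩

lemma exists_min_multiset {M : Multiset (Fin n)} (h : M ≠ 0) :
    ∃ x ∈ M, ∀ y ∈ M, x ≤ y := by
  have hT : M.toFinset.Nonempty := by rw [Multiset.toFinset_nonempty]; exact h
  exact ⟨M.toFinset.min' hT, Multiset.mem_toFinset.mp (M.toFinset.min'_mem hT),
    fun y hy => M.toFinset.min'_le y (Multiset.mem_toFinset.mpr hy)⟩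

lemma exists_max_multiset {M : Multiset (Fin n)} (h : M ≠ 0) :
    ∃ x ∈ M, ∀ y ∈ M, y ≤ x := by
  have hT : M.toFinset.Nonempty := by rw [Multiset.toFinset_nonempty]; exact h
  exact ⟨M.toFinset.max' hT, Multiset.mem_toFinset.mp (M.toFinset.max'_mem hT),
    fun y hy => M.toFinset.le_max' y (Multiset.mem_toFinset.mpr hy)⟩

/-- key pair extraction: if `k0` is minimal in `b := P.map snd` and `m` is maximal among
elements of `a := F + P.map fst` that are `< k0`, then `(m, k0) ∈ P`. -/
lemma key_pair {F : Multiset (Fin n)} {P : Multiset (Fin n × Fin n)} (hV : Valid F P)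
    {k0 m : Fin n}
    (hk0 : k0 ∈ P.map Prod.snd) (hk0min : ∀ k ∈ P.map Prod.snd, k0 ≤ k)
    (hm : m ∈ (F + P.map Prod.fst).filter (· < k0))
    (hmmax : ∀ x ∈ (F + P.map Prod.fst).filter (· < k0), x ≤ m) :
    (m, k0) ∈ P := by
  obtain ⟨p, hp, hp2⟩ := Multiset.mem_map.mp hk0
  have hmlt : m < k0 := (Multiset.mem_filter.mp hm).2
  have hmem : m ∈ F + P.map Prod.fst := (Multiset.mem_filter.mp hm).1
  have hp1le : p.1 ≤ m := by
    apply hmmax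
    rw [Multiset.mem_filter]
    exact ⟨Multiset.mem_add.mpr (Or.inr (Multiset.mem_map_of_mem _ hp)),
      lt_of_lt_of_eq (hV.1 p hp) hp2⟩
  rcases Multiset.mem_add.mp hmem with hF | hPf
  · -- m is free
    rcases eq_or_lt_of_le hp1le with he | hlt
    · have : p = (m, k0) := by
        rcases p with ⟨p1, p2⟩; simp_all
      exact this ▸ hp
    · exact absurd ⟨hlt, lt_of_lt_of_eq hmlt hp2.symm⟩ (hV.2.2 p hp m hF)
  · -- m is the first component of some q ∈ P
    obtain ⟨q, hq, hq1⟩ := Multiset.mem_map.mp hPf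
    rcases eq_or_lt_of_le hp1le with he | hlt
    · have : p = (m, k0) := by rcases p with ⟨p1, p2⟩; simp_all
      exact this ▸ hp
    · rcases eq_or_lt_of_le (hk0min q.2 (Multiset.mem_map_of_mem _ hq)) with he2 | hlt2
      · have : q = (m, k0) := by rcases q with ⟨q1, q2⟩; simp_all
        exact this ▸ hq
      · refine absurd ⟨lt_of_lt_of_eq hlt hq1.symm, ?_, ?_⟩ (hV.2.1 p hp q hq)
        · rw [hq1, hp2]; exact hmlt
        · rw [hp2]; exact hlt2

lemma comb_unique : ∀ (N : ℕ) (F₁ F₂ : Multiset (Fin n)) (P₁ P₂ : Multiset (Fin n × Fin n)),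
    Multiset.card P₁ ≤ N → Valid F₁ P₁ → Valid F₂ P₂ →
    F₁ + P₁.map Prod.fst = F₂ + P₂.map Prod.fst →
    P₁.map Prod.snd = P₂.map Prod.snd →
    F₁ = F₂ ∧ P₁ = P₂ := by
  intro N
  induction N with
  | zero =>
    intro F₁ F₂ P₁ P₂ hcard _ _ ha hb
    have h1 : P₁ = 0 := Multiset.card_eq_zero.mp (Nat.le_zero.mp hcard)
    subst h1
    have h2 : P₂ = 0 := Multiset.map_eq_zero.mp
      (show Multiset.map Prod.snd P₂ = 0 by rw [← hb]; simp)
    subst h2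
    simpa using ha
  | succ N ih =>
    intro F₁ F₂ P₁ P₂ hcard hV₁ hV₂ ha hb
    rcases eq_or_ne P₁ 0 with rfl | hP₁
    · have h2 : P₂ = 0 := Multiset.map_eq_zero.mp
        (show Multiset.map Prod.snd P₂ = 0 by rw [← hb]; simp)
      subst h2; simpa using ha
    have hbne : P₁.map Prod.snd ≠ 0 := by simpa using hP₁
    obtain ⟨k0, hk0b, hk0min⟩ := exists_min_multiset hbne
    have hsne : (F₁ + P₁.map Prod.fst).filter (· < k0) ≠ 0 := by
      obtain ⟨p, hp, hp2⟩ := Multiset.mem_map.mp hk0b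
      have hmem : p.1 ∈ (F₁ + P₁.map Prod.fst).filter (· < k0) := by
        rw [Multiset.mem_filter]
        exact ⟨Multiset.mem_add.mpr (Or.inr (Multiset.mem_map_of_mem _ hp)),
          lt_of_lt_of_eq (hV₁.1 p hp) hp2⟩
      exact fun h => by simp [h] at hmem
    obtain ⟨m, hms, hmmax⟩ := exists_max_multiset hsne
    have hmk₁ : (m, k0) ∈ P₁ := key_pair hV₁ hk0b hk0min hms hmmax
    have hmk₂ : (m, k0) ∈ P₂ := by
      rw [hb] at hk0b hk0min
      rw [ha] at hms hmmax
      exact key_pair hV₂ hk0b hk0min hms hmmax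
    have hc₁ : P₁ = (m, k0) ::ₘ P₁.erase (m, k0) := (Multiset.cons_erase hmk₁).symm
    have hc₂ : P₂ = (m, k0) ::ₘ P₂.erase (m, k0) := (Multiset.cons_erase hmk₂).symm
    have hcard' : Multiset.card (P₁.erase (m, k0)) ≤ N := by
      have := hcard
      rw [hc₁, Multiset.card_cons] at this
      omega
    have hV₁' : Valid F₁ (P₁.erase (m, k0)) :=
      valid_mono le_rfl (Multiset.erase_le _ _) hV₁
    have hV₂' : Valid F₂ (P₂.erase (m, k0)) :=
      valid_mono le_rfl (Multiset.erase_le _ _) hV₂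
    have ha' : F₁ + (P₁.erase (m, k0)).map Prod.fst
        = F₂ + (P₂.erase (m, k0)).map Prod.fst := by
      apply (Multiset.cons_inj_right m).mp
      have h1 : m ::ₘ (F₁ + (P₁.erase (m, k0)).map Prod.fst)
          = F₁ + P₁.map Prod.fst := by
        rw [hc₁, Multiset.map_cons]; simp [Multiset.add_cons]
      have h2 : m ::ₘ (F₂ + (P₂.erase (m, k0)).map Prod.fst)
          = F₂ + P₂.map Prod.fst := by
        rw [hc₂, Multiset.map_cons]; simp [Multiset.add_cons]
      rw [h1, h2, ha]
    have hb' : (P₁.erase (m, k0)).map Prod.snd = (P₂.erase (m, k0)).map Prod.snd := by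
      apply (Multiset.cons_inj_right k0).mp
      have h1 : k0 ::ₘ (P₁.erase (m, k0)).map Prod.snd = P₁.map Prod.snd := by
        rw [hc₁, Multiset.map_cons]; simp [Multiset.erase_cons_head]
      have h2 : k0 ::ₘ (P₂.erase (m, k0)).map Prod.snd = P₂.map Prod.snd := by
        rw [hc₂, Multiset.map_cons]; simp [Multiset.erase_cons_head]
      rw [h1, h2, hb]
    obtain ⟨hF, hP⟩ := ih F₁ F₂ _ _ hcard' hV₁' hV₂' ha' hb'
    exact ⟨hF, by rw [hc₁, hc₂, hP]⟩


lemma Emul_split {F₁ F₂ : Multiset (Fin n)} {P₁ P₂ : Multiset (Fin n × Fin n)}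
    (h : Emul F₁ P₁ = Emul F₂ P₂) :
    F₁ + P₁.map Prod.fst = F₂ + P₂.map Prod.fst ∧ P₁.map Prod.snd = P₂.map Prod.snd := by
  constructor
  · apply Multiset.ext.mpr
    intro i
    have := congrArg (Multiset.count (inl i : Fin n ⊕ Fin n)) h
    rw [Emul, Emul, Multiset.count_add, Multiset.count_add] at this
    rw [Multiset.count_map_eq_count' _ _ Sum.inl_injective,
      Multiset.count_map_eq_count' _ _ Sum.inl_injective] at this
    have h0 : ∀ (Ps : Multiset (Fin n)),
        Multiset.count (inl i : Fin n ⊕ Fin n) (Ps.map inr) = 0 := fun Ps =>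
      Multiset.count_eq_zero.mpr (fun hmem => by
        obtain ⟨x, _, hx⟩ := Multiset.mem_map.mp hmem; exact Sum.inr_ne_inl hx)
    rw [h0, h0] at this
    simpa using this
  · apply Multiset.ext.mpr
    intro i
    have := congrArg (Multiset.count (inr i : Fin n ⊕ Fin n)) h
    rw [Emul, Emul, Multiset.count_add, Multiset.count_add] at this
    rw [Multiset.count_map_eq_count' _ _ Sum.inr_injective,
      Multiset.count_map_eq_count' _ _ Sum.inr_injective] at this
    have h0 : ∀ (Ps : Multiset (Fin n)),
        Multiset.count (inr i : Fin n ⊕ Fin n) (Ps.map inl) = 0 := fun Ps =>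
      Multiset.count_eq_zero.mpr (fun hmem => by
        obtain ⟨x, _, hx⟩ := Multiset.mem_map.mp hmem; exact Sum.inl_ne_inr hx)
    rw [h0, h0] at this
    simpa using this

lemma mem_normal {w : MvPolynomial (Fin n ⊕ Fin n) K} (hw : w ∈ normalProducts K n) :
    ∃ (F : Multiset (Fin n)) (P : Multiset (Fin n × Fin n)),
      Valid F P ∧ w = W F P := by
  obtain ⟨c, d, idx, jk, h1, h2, h3, rfl⟩ := hw
  refine ⟨Finset.univ.val.map idx, Finset.univ.val.map jk, ⟨?_, ?_, ?_⟩, ?_⟩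
  · intro p hp
    obtain ⟨t, _, rfl⟩ := Multiset.mem_map.mp hp
    exact h1 t
  · intro p hp q hq
    obtain ⟨t, _, rfl⟩ := Multiset.mem_map.mp hp
    obtain ⟨u, _, rfl⟩ := Multiset.mem_map.mp hq
    exact fun hh => h2 t u hh
  · intro p hp t ht
    obtain ⟨u, _, rfl⟩ := Multiset.mem_map.mp hp
    obtain ⟨v, _, rfl⟩ := Multiset.mem_map.mp ht
    exact fun hh => h3 u v hh
  · rw [W, Multiset.map_map, Multiset.map_map]
    rfl

lemma normal_ne_zero {w : MvPolynomial (Fin n ⊕ Fin n) K} (hw : w ∈ normalProducts K n) :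
    w ≠ 0 := by
  obtain ⟨F, P, hV, rfl⟩ := mem_normal hw
  exact Monic.ne_zero (W_spec hV.1).1

lemma normal_supDegree_inj {w₁ w₂ : MvPolynomial (Fin n ⊕ Fin n) K}
    (h₁ : w₁ ∈ normalProducts K n) (h₂ : w₂ ∈ normalProducts K n)
    (h : supDegree (Dm n) w₁ = supDegree (Dm n) w₂) : w₁ = w₂ := by
  obtain ⟨F₁, P₁, hV₁, rfl⟩ := mem_normal h₁
  obtain ⟨F₂, P₂, hV₂, rfl⟩ := mem_normal h₂
  rw [(W_spec hV₁.1).2, (W_spec hV₂.1).2] at h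
  have hE : Emul F₁ P₁ = Emul F₂ P₂ :=
    Multiset.toFinsupp.injective (Dm_inj h)
  obtain ⟨ha, hb⟩ := Emul_split hE
  obtain ⟨hF, hP⟩ := comb_unique (Multiset.card P₁) F₁ F₂ P₁ P₂ le_rfl hV₁ hV₂ ha hb
  rw [hF, hP]

end NPaux

/-- The set of normal products is linearly independent over `K`. -/
theorem normalProducts_linearIndependent {K : Type*} [Field K] [CharZero K] (n : ℕ) :
    LinearIndependent K
      (fun b : normalProducts K n => (b : MvPolynomial (Fin n ⊕ Fin n) K)) := by
  classical
  rw [linearIndependent_iff']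
  intro s g hsum i hi
  by_contra hgi
  set v : normalProducts K n → MvPolynomial (Fin n ⊕ Fin n) K := fun b => (b : _) with hv
  have hzero : ∑ j ∈ s.filter (fun j => g j ≠ 0), g j • v j = 0 := by
    rw [Finset.sum_filter_of_ne (fun x _ hne => by
      intro hgx; rw [hgx, zero_smul] at hne; exact hne rfl)]
    exact hsum
  refine AddMonoidAlgebra.sum_ne_zero_of_injOn_supDegree (D := NPaux.Dm n)
    (s := s.filter (fun j => g j ≠ 0)) (f := fun j => g j • v j) ?_ ?_ ?_ hzero
  · rw [Finset.nonempty_iff_ne_empty]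
    intro hempty
    have : i ∈ s.filter (fun j => g j ≠ 0) := Finset.mem_filter.mpr ⟨hi, hgi⟩
    rw [hempty] at this
    simp at this
  · intro j hj
    have hgj : g j ≠ 0 := (Finset.mem_filter.mp hj).2
    exact smul_ne_zero hgj (NPaux.normal_ne_zero j.2)
  · intro j hj k hk hjk
    have hgj : g j ≠ 0 := (Finset.mem_filter.mp hj).2
    have hgk : g k ≠ 0 := (Finset.mem_filter.mp hk).2
    have hsup : ∀ (l : normalProducts K n), g l ≠ 0 →
        AddMonoidAlgebra.supDegree (NPaux.Dm n) (g l • v l)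
          = AddMonoidAlgebra.supDegree (NPaux.Dm n) (v l) := by
      intro l hgl
      unfold AddMonoidAlgebra.supDegree
      congr 1
      exact Finsupp.support_smul_eq hgl
    have := hjk
    simp only [Function.comp_apply] at this
    rw [hsup j hgj, hsup k hgk] at this
    exact Subtype.coe_injective (NPaux.normal_supDegree_inj j.2 k.2 this)
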